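/- arXiv:1311.7113 — 2 statements merged into one kernel-verified Lean document; each statement's English description precedes it below -/
import Mathlib

section
/- Let M = {v_1^{m_1}, ..., v_ℓ^{m_ℓ}} be a multiset with distinct ranks and multiplicities m_i, let n_0 = 0, n_i = m_1 + ... + m_i, and let θ = (θ_1, ..., θ_ℓ) and η = (η_1, ..., η_ℓ), where θ_i, η_i are permutations of [n_{i-1}+1, n_i] for each i. Then for every σ, π ∈ S(M), d_K(T_θ(σ), T_η(π)) ≥ d_K(σ, π) + Σ_{i=1}^{ℓ} d_K(θ_i, η_i). -/
/-- `AdjTrans σ π` : the sequence `π` is obtained from the sequence `σ` by exchanging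
two distinct adjacent elements (an adjacent transposition). -/
def AdjTrans (σ π : List ℤ) : Prop :=
  ∃ (l₁ l₂ : List ℤ) (a b : ℤ), a ≠ b ∧ σ = l₁ ++ a :: b :: l₂ ∧ π = l₁ ++ b :: a :: l₂

/-- `StepsTo n σ π` : `π` can be obtained from `σ` by a sequence of `n` adjacent
transpositions. -/
def StepsTo : ℕ → List ℤ → List ℤ → Prop
  | 0 => fun σ π => σ = π
  | n + 1 => fun σ π => ∃ τ, AdjTrans σ τ ∧ StepsTo n τ π

/-- The Kendall τ-distance between two sequences: the minimum number of adjacent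
transpositions needed to transform one into the other. -/
noncomputable def dK (σ π : List ℤ) : ℕ := sInf {n | StepsTo n σ π}

/-- The list `[a, a+1, ..., a+len-1]` of integers. -/
def rangeList (a len : ℕ) : List ℤ := (List.range' a len).map (fun x => (x : ℤ))

/-- The substitution map `T_θ`: the `r`-th occurrence (from the left, `0`-indexed) of a
rank `a` in `σ` is replaced by the `r`-th entry of the list `θ a`. -/
def Tmap (θ : ℤ → List ℤ) (σ : List ℤ) : List ℤ :=
  (List.range σ.length).map (fun j =>
    (θ (σ.getD j 0)).getD ((σ.take j).count (σ.getD j 0)) 0)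

/-- `psiEntry σ a s` : the number of positions in `σ` strictly to the right of the `s`-th
occurrence (`0`-indexed) of `a` in `σ` that hold an element smaller than `a`. -/
def psiEntry (σ : List ℤ) (a : ℤ) (s : ℕ) : ℕ :=
  (σ.drop (((σ.indexesOf a).getD s σ.length) + 1)).countP (fun x => decide (x < a))

/-- The Manhattan distance between two vectors of naturals (presented as lists). -/
def manhattanL (x y : List ℕ) : ℕ :=
  ∑ i ∈ Finset.range (max x.length y.length), ((x.getD i 0 : ℤ) - (y.getD i 0 : ℤ)).natAbs

/-- The Lee distance over `Z_q` between two vectors with entries in `{0, …, q-1}`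
(presented as lists). -/
def leeDistL (q : ℕ) (x y : List ℕ) : ℕ :=
  ∑ i ∈ Finset.range (max x.length y.length),
    min (((x.getD i 0 : ℤ) - (y.getD i 0 : ℤ)).natAbs)
      (q - ((x.getD i 0 : ℤ) - (y.getD i 0 : ℤ)).natAbs)

/-- The Lee distance between two vectors over `ZMod q`. -/
def zmodLee {q N : ℕ} (x y : Fin N → ZMod q) : ℕ :=
  ∑ i, min (x i - y i).val (y i - x i).val

/-- `permList k σ` : `σ` is (an ordering representing) a permutation of `{1, …, k}`. -/
def permList (k : ℕ) (σ : List ℤ) : Prop :=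
  (↑σ : Multiset ℤ) = (↑(rangeList 1 k) : Multiset ℤ)

/-- The multiset `M_{k,r} = {0^k, k+1, …, k+r}`. -/
def Mkr (k r : ℕ) : Multiset ℤ :=
  Multiset.replicate k (0 : ℤ) + (↑(rangeList (k + 1) r) : Multiset ℤ)

/-- `α_{↓k}` : delete from `α` all elements larger than `k`. -/
def restrictTo (k : ℕ) (α : List ℤ) : List ℤ :=
  α.filter (fun x => decide (x ≤ (k : ℤ)))

/-- `α_{k↦0}` : replace in `α` every element of `{1, …, k}` by `0`. -/
def mapToZero (k : ℕ) (α : List ℤ) : List ℤ :=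
  α.map (fun x => if 1 ≤ x ∧ x ≤ (k : ℤ) then 0 else x)

/-- `star σ ρ = σ ∗ ρ` : replace the zeros of `ρ`, from left to right, by the elements
of `σ` in order. -/
def starP : List ℤ → List ℤ → List ℤ
  | _, [] => []
  | σ, x :: ρ' => if x = 0 then σ.headD 0 :: starP σ.tail ρ' else x :: starP σ ρ'


lemma stepsTo_trans {m n : ℕ} {A B C : List ℤ} (h1 : StepsTo m A B) (h2 : StepsTo n B C) :
    StepsTo (m + n) A C := by
  induction m generalizing A with
  | zero => simpa [StepsTo] using h1 ▸ h2
  | succ m ih =>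
    obtain ⟨τ, hs, hr⟩ := h1
    exact Nat.succ_add m n ▸ ⟨τ, hs, ih hr⟩

lemma adjTrans_cons {A B : List ℤ} (x : ℤ) (h : AdjTrans A B) : AdjTrans (x :: A) (x :: B) := by
  obtain ⟨l₁, l₂, a, b, hab, hA, hB⟩ := h
  exact ⟨x :: l₁, l₂, a, b, hab, by simp [hA], by simp [hB]⟩

lemma stepsTo_cons {n : ℕ} {A B : List ℤ} (x : ℤ) (h : StepsTo n A B) :
    StepsTo n (x :: A) (x :: B) := by
  induction n generalizing A with
  | zero => simp_all [StepsTo]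
  | succ n ih =>
    obtain ⟨τ, hs, hr⟩ := h
    exact ⟨x :: τ, adjTrans_cons x hs, ih hr⟩

lemma adjTrans_multiset {A B : List ℤ} (h : AdjTrans A B) : (↑A : Multiset ℤ) = ↑B := by
  obtain ⟨l₁, l₂, a, b, hab, hA, hB⟩ := h
  subst hA hB
  exact Multiset.coe_eq_coe.mpr (List.Perm.append_left l₁ (List.Perm.swap b a l₂))

lemma stepsTo_multiset {n : ℕ} {A B : List ℤ} (h : StepsTo n A B) : (↑A : Multiset ℤ) = ↑B := by
  induction n generalizing A with
  | zero => simp_all [StepsTo]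
  | succ n ih =>
    obtain ⟨τ, hs, hr⟩ := h
    exact (adjTrans_multiset hs).trans (ih hr)

lemma move_front (b : ℤ) (l₁ l₂ : List ℤ) : ∃ n, StepsTo n (l₁ ++ b :: l₂) (b :: (l₁ ++ l₂)) := by
  induction l₁ with
  | nil => exact ⟨0, rfl⟩
  | cons a l₁ ih =>
    obtain ⟨n, hn⟩ := ih
    by_cases hab : a = b
    · exact ⟨n, by simpa [hab] using stepsTo_cons a hn⟩
    · refine ⟨n + 1, stepsTo_trans (stepsTo_cons a hn) ?_⟩
      exact ⟨b :: a :: (l₁ ++ l₂), ⟨[], l₁ ++ l₂, a, b, hab, rfl, rfl⟩, rfl⟩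

lemma connected {A B : List ℤ} (h : (↑A : Multiset ℤ) = ↑B) : ∃ n, StepsTo n A B := by
  induction B generalizing A with
  | nil => exact ⟨0, by simpa [StepsTo] using h⟩
  | cons b B ih =>
    (have hb : b ∈ A := by
      have : b ∈ (↑A : Multiset ℤ) := by rw [h]; simp
      simpa using this)
    obtain ⟨l₁, l₂, rfl⟩ := List.append_of_mem hb
    obtain ⟨n₁, h₁⟩ := move_front b l₁ l₂
    have hmv : (↑(l₁ ++ l₂) : Multiset ℤ) = ↑B := by
      have := (stepsTo_multiset h₁).symm.trans h
      simpa using this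
    obtain ⟨n₂, h₂⟩ := ih hmv
    exact ⟨n₁ + n₂, stepsTo_trans h₁ (stepsTo_cons b h₂)⟩


lemma tail_getD (l : List ℤ) (n : ℕ) (d : ℤ) : l.tail.getD n d = l.getD (n + 1) d := by
  cases l <;> simp [List.getD]

lemma Tmap_cons (θ : ℤ → List ℤ) (a : ℤ) (s : List ℤ) :
    Tmap θ (a :: s) = (θ a).getD 0 0 :: Tmap (Function.update θ a (θ a).tail) s := by
  unfold Tmap
  rw [List.length_cons, List.range_succ_eq_map, List.map_cons, List.map_map]
  congr 1
  apply List.map_congr_left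
  intro j hj
  simp only [Function.comp_apply]
  have h1 : (a :: s).getD (j + 1) 0 = s.getD j 0 := by simp [List.getD]
  have h2 : ((a :: s).take (j + 1)) = a :: s.take j := by simp
  rw [h1, h2]
  by_cases hxa : s.getD j 0 = a
  · rw [hxa, Function.update_self, tail_getD]
    congr 1
    simp [List.count_cons]
  · rw [Function.update_of_ne hxa]
    congr 1
    simp only [List.getD_eq_getElem?_getD] at hxa
    simp [List.count_cons, Ne.symm hxa]

lemma Tmap_map (c : ℤ → ℤ) (s : List ℤ) : ∀ θ : ℤ → List ℤ,
    (∀ x ∈ s, s.count x ≤ (θ x).length ∧ ∀ y ∈ (θ x).take (s.count x), c y = x) →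
    (Tmap θ s).map c = s := by
  induction s with
  | nil => intro θ _; rfl
  | cons a t ih =>
    intro θ H
    obtain ⟨hlen, hc⟩ := H a ((List.mem_cons_self (a := a) (l := t)))
    have hcnt : (a :: t).count a = t.count a + 1 := List.count_cons_self (a := a) (l := t)
    rw [hcnt] at hlen hc
    rcases hya : θ a with _ | ⟨y, ys⟩
    · rw [hya] at hlen; simp at hlen
    rw [hya, List.length_cons] at hlen
    rw [hya] at hc
    rw [Tmap_cons, hya, List.map_cons, List.tail_cons, List.getD_cons_zero]
    have hhead : c y = a := hc y (by simp [List.take_succ_cons])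
    have htail : (Tmap (Function.update θ a ys) t).map c = t := by
      apply ih
      intro x hx
      by_cases hxa : x = a
      · subst hxa
        rw [Function.update_self]
        refine ⟨by omega, fun z hz => ?_⟩
        exact hc z (by rw [List.take_succ_cons]; exact List.mem_cons_of_mem y hz)
      · rw [Function.update_of_ne hxa]
        have := H x (List.mem_cons_of_mem a hx)
        rwa [List.count_cons_of_ne (Ne.symm hxa)] at this
    rw [htail, hhead]

lemma Tmap_mem (s : List ℤ) : ∀ θ : ℤ → List ℤ,
    (∀ x ∈ s, s.count x ≤ (θ x).length) →
    ∀ y ∈ Tmap θ s, ∃ x ∈ s, y ∈ (θ x).take (s.count x) := by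
  induction s with
  | nil => intro θ _ y hy; simp [Tmap] at hy
  | cons a t ih =>
    intro θ H u hu
    have hlen := H a ((List.mem_cons_self (a := a) (l := t)))
    have hcnt : (a :: t).count a = t.count a + 1 := List.count_cons_self (a := a) (l := t)
    rw [hcnt] at hlen
    rcases hya : θ a with _ | ⟨y, ys⟩
    · rw [hya] at hlen; simp at hlen
    rw [hya, List.length_cons] at hlen
    rw [Tmap_cons, hya, List.tail_cons, List.getD_cons_zero, List.mem_cons] at hu
    rcases hu with hu | hu
    · exact ⟨a, (List.mem_cons_self (a := a) (l := t)), by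
        rw [hya, hcnt, List.take_succ_cons]; exact hu ▸ (List.mem_cons_self (a := y) (l := _))⟩
    · have H' : ∀ x ∈ t, t.count x ≤ ((Function.update θ a ys) x).length := by
        intro x hx
        by_cases hxa : x = a
        · subst hxa; rw [Function.update_self]; omega
        · rw [Function.update_of_ne hxa]
          have := H x (List.mem_cons_of_mem a hx)
          rwa [List.count_cons_of_ne (Ne.symm hxa)] at this
      obtain ⟨x, hx, hux⟩ := ih _ H' u hu
      by_cases hxa : x = a
      · subst hxa
        rw [Function.update_self] at hux
        exact ⟨x, (List.mem_cons_self (a := x) (l := t)), by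
          rw [hya, hcnt, List.take_succ_cons]
          exact List.mem_cons_of_mem y hux⟩
      · rw [Function.update_of_ne hxa] at hux
        exact ⟨x, List.mem_cons_of_mem a hx, by rwa [List.count_cons_of_ne (Ne.symm hxa)]⟩

lemma Tmap_filter (p : ℤ → Bool) (w : ℤ) (s : List ℤ) : ∀ θ : ℤ → List ℤ,
    (∀ x ∈ s, s.count x ≤ (θ x).length ∧
      ∀ y ∈ (θ x).take (s.count x), (p y = true ↔ x = w)) →
    (Tmap θ s).filter p = (θ w).take (s.count w) := by
  induction s with
  | nil => intro θ _; simp [Tmap]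
  | cons a t ih =>
    intro θ H
    obtain ⟨hlen, hp⟩ := H a ((List.mem_cons_self (a := a) (l := t)))
    have hcnt : (a :: t).count a = t.count a + 1 := List.count_cons_self (a := a) (l := t)
    rw [hcnt] at hlen hp
    rcases hya : θ a with _ | ⟨y, ys⟩
    · rw [hya] at hlen; simp at hlen
    rw [hya, List.length_cons] at hlen
    rw [hya] at hp
    rw [Tmap_cons, hya, List.tail_cons, List.getD_cons_zero, List.filter_cons]
    have hH' : ∀ x ∈ t, t.count x ≤ ((Function.update θ a ys) x).length ∧
        ∀ z ∈ ((Function.update θ a ys) x).take (t.count x), (p z = true ↔ x = w) := by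
      intro x hx
      by_cases hxa : x = a
      · subst hxa
        rw [Function.update_self]
        refine ⟨by omega, fun z hz => ?_⟩
        exact hp z (by rw [List.take_succ_cons]; exact List.mem_cons_of_mem y hz)
      · rw [Function.update_of_ne hxa]
        have := H x (List.mem_cons_of_mem a hx)
        rwa [List.count_cons_of_ne (Ne.symm hxa)] at this
    have hrec := ih _ hH'
    have hheadmem : y ∈ (y :: ys).take (t.count a + 1) := by
      rw [List.take_succ_cons]; exact (List.mem_cons_self (a := y) (l := _))
    by_cases haw : a = w
    · subst haw
      have hpy : p y = true := (hp y hheadmem).mpr rfl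
      rw [hpy]
      simp only [if_true]
      rw [hrec, Function.update_self, hcnt, hya, List.take_succ_cons]
    · have hpy : ¬ p y = true := fun h => haw ((hp y hheadmem).mp h)
      rw [if_neg hpy, hrec, Function.update_of_ne (fun h => haw h.symm : w ≠ a),
        List.count_cons_of_ne haw]

lemma filter_swap_eq (p : ℤ → Bool) (l₁ l₂ : List ℤ) (a b : ℤ)
    (h : ¬(p a = true ∧ p b = true)) :
    (l₁ ++ a :: b :: l₂).filter p = (l₁ ++ b :: a :: l₂).filter p := by
  simp only [List.filter_append, List.filter_cons]
  rcases ha : p a <;> rcases hb : p b <;> simp_all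

lemma split_lemma (ℓ : ℕ) (p : ℕ → ℤ → Bool) (c : ℤ → ℤ)
    (hdisj : ∀ i j x, i < ℓ → j < ℓ → p i x = true → p j x = true → i = j)
    (hcc : ∀ i x y, i < ℓ → p i x = true → p i y = true → c x = c y)
    (hcx : ∀ i j x y, i < ℓ → j < ℓ → i ≠ j → p i x = true → p j y = true → c x ≠ c y) :
    ∀ n A B, StepsTo n A B → (∀ x ∈ A, ∃ i, i < ℓ ∧ p i x = true) →
    ∃ (n₀ : ℕ) (N : ℕ → ℕ), n₀ + ∑ i ∈ Finset.range ℓ, N i ≤ n ∧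
      StepsTo n₀ (A.map c) (B.map c) ∧
      ∀ i, i < ℓ → StepsTo (N i) (A.filter (p i)) (B.filter (p i)) := by
  intro n
  induction n with
  | zero =>
    intro A B hAB _
    cases hAB
    exact ⟨0, fun _ => 0, by simp, rfl, fun i _ => rfl⟩
  | succ n IH =>
    intro A B hAB hcov
    obtain ⟨τ, hstep, hrest⟩ := hAB
    have hcovτ : ∀ x ∈ τ, ∃ i, i < ℓ ∧ p i x = true := by
      intro x hx
      apply hcov
      have := adjTrans_multiset hstep
      rw [← Multiset.mem_coe, this, Multiset.mem_coe]
      exact hx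
    obtain ⟨n₀, N, hsum, hmap, hfil⟩ := IH τ B hrest hcovτ
    obtain ⟨l₁, l₂, a, b, hab, hA, hτ⟩ := hstep
    have ha : a ∈ A := by rw [hA]; simp
    have hb : b ∈ A := by rw [hA]; simp
    obtain ⟨i, hi, hpa⟩ := hcov a ha
    obtain ⟨j, hj, hpb⟩ := hcov b hb
    by_cases hij : i = j
    · subst hij
      have hmapeq : A.map c = τ.map c := by
        rw [hA, hτ]
        simp [hcc i a b hi hpa hpb]
      have hfi : AdjTrans (A.filter (p i)) (τ.filter (p i)) := by
        refine ⟨l₁.filter (p i), l₂.filter (p i), a, b, hab, ?_, ?_⟩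
        · rw [hA]; simp [List.filter_append, List.filter_cons, hpa, hpb]
        · rw [hτ]; simp [List.filter_append, List.filter_cons, hpa, hpb]
      refine ⟨n₀, Function.update N i (N i + 1), ?_, by rwa [hmapeq], ?_⟩
      · have : ∑ k ∈ Finset.range ℓ, Function.update N i (N i + 1) k
            = (∑ k ∈ Finset.range ℓ, N k) + 1 := by
          rw [Finset.sum_update_of_mem (Finset.mem_range.mpr hi),
            Finset.sum_eq_sum_sdiff_singleton_add (Finset.mem_range.mpr hi) N]
          omega
        omega
      · intro k hk
        by_cases hki : k = i
        · subst hki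
          rw [Function.update_self]
          exact ⟨τ.filter (p k), hfi, hfil k hk⟩
        · rw [Function.update_of_ne hki]
          have hka : ¬ p k a = true := fun h => hki (hdisj k i a hk hi h hpa)
          have heq : A.filter (p k) = τ.filter (p k) := by
            rw [hA, hτ]
            exact filter_swap_eq _ _ _ _ _ (fun h => hka h.1)
          rw [heq]
          exact hfil k hk
    · have hcab : c a ≠ c b := hcx i j a b hi hj hij hpa hpb
      have hmadj : AdjTrans (A.map c) (τ.map c) :=
        ⟨l₁.map c, l₂.map c, c a, c b, hcab, by rw [hA]; simp, by rw [hτ]; simp⟩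
      refine ⟨n₀ + 1, N, by omega, ⟨τ.map c, hmadj, hmap⟩, ?_⟩
      · intro k hk
        have heq : A.filter (p k) = τ.filter (p k) := by
          rw [hA, hτ]
          refine filter_swap_eq _ _ _ _ _ (fun h => ?_)
          exact hij ((hdisj i k a hi hk hpa h.1).trans (hdisj k j b hk hj h.2 hpb))
        rw [heq]
        exact hfil k hk

lemma multiset_partition (ℓ : ℕ) (p : ℕ → ℤ → Bool)
    (hdisj : ∀ i j x, i < ℓ → j < ℓ → p i x = true → p j x = true → i = j) :
    ∀ L : List ℤ, (∀ x ∈ L, ∃ i, i < ℓ ∧ p i x = true) →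
      (↑L : Multiset ℤ) = ∑ i ∈ Finset.range ℓ, (↑(L.filter (p i)) : Multiset ℤ) := by
  intro L
  induction L with
  | nil => simp
  | cons a t ih =>
    intro hcov
    obtain ⟨i, hi, hpa⟩ := hcov a ((List.mem_cons_self (a := a) (l := t)))
    have ht := ih (fun x hx => hcov x (List.mem_cons_of_mem a hx))
    have hstep : ∀ k, (↑((a :: t).filter (p k)) : Multiset ℤ)
        = (if p k a then ({a} : Multiset ℤ) else 0) + ↑(t.filter (p k)) := by
      intro k
      rw [List.filter_cons]
      by_cases h : p k a = true
      · simp [h]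
      · simp [h]
    calc (↑(a :: t) : Multiset ℤ) = {a} + ↑t := by
          rw [← Multiset.cons_coe, ← Multiset.singleton_add]
      _ = (∑ k ∈ Finset.range ℓ, if p k a then ({a} : Multiset ℤ) else 0)
            + ∑ k ∈ Finset.range ℓ, (↑(t.filter (p k)) : Multiset ℤ) := by
          rw [ht]
          congr 1
          rw [Finset.sum_eq_single i]
          · simp [hpa]
          · intro k hk hki
            have : ¬ p k a = true := fun h => hki (hdisj k i a (Finset.mem_range.mp hk) hi h hpa)
            simp [this]
          · intro h; exact absurd (Finset.mem_range.mpr hi) h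
      _ = ∑ k ∈ Finset.range ℓ, (↑((a :: t).filter (p k)) : Multiset ℤ) := by
          rw [← Finset.sum_add_distrib]
          exact Finset.sum_congr rfl (fun k _ => (hstep k).symm)


def Sfun (m : ℕ → ℕ) (i : ℕ) : ℕ := ∑ j ∈ Finset.range i, m j

def pfun (m : ℕ → ℕ) (i : ℕ) (x : ℤ) : Bool :=
  decide ((Sfun m i : ℤ) < x ∧ x ≤ (Sfun m (i+1) : ℤ))

noncomputable def cfun (ℓ : ℕ) (v : ℕ → ℤ) (m : ℕ → ℕ) (x : ℤ) : ℤ :=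
  if h : ∃ i, i < ℓ ∧ pfun m i x = true then v (Nat.find h) else 0

lemma Sfun_mono (m : ℕ → ℕ) {i j : ℕ} (h : i ≤ j) : Sfun m i ≤ Sfun m j :=
  Finset.sum_le_sum_of_subset (Finset.range_subset_range.mpr h)

lemma Sfun_succ (m : ℕ → ℕ) (i : ℕ) : Sfun m (i+1) = Sfun m i + m i :=
  Finset.sum_range_succ m i

lemma pfun_iff (m : ℕ → ℕ) (i : ℕ) (x : ℤ) :
    pfun m i x = true ↔ (Sfun m i : ℤ) < x ∧ x ≤ (Sfun m (i+1) : ℤ) := by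
  simp [pfun]

lemma pfun_disj (ℓ : ℕ) (m : ℕ → ℕ) :
    ∀ i j x, i < ℓ → j < ℓ → pfun m i x = true → pfun m j x = true → i = j := by
  intro i j x _ _ hi hj
  rw [pfun_iff] at hi hj
  by_contra hij
  rcases Nat.lt_or_ge i j with h | h
  · have : Sfun m (i+1) ≤ Sfun m j := Sfun_mono m h
    have := (Int.ofNat_le.mpr this)
    omega
  · have hji : j < i := by omega
    have : Sfun m (j+1) ≤ Sfun m i := Sfun_mono m hji
    have := (Int.ofNat_le.mpr this)
    omega

lemma mem_rangeList (a len : ℕ) (y : ℤ) :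
    y ∈ rangeList a len ↔ (a : ℤ) ≤ y ∧ y < (a : ℤ) + len := by
  unfold rangeList
  constructor
  · intro h
    simp at h
    obtain ⟨k, ⟨h1, h2⟩, rfl⟩ := h
    omega
  · rintro ⟨h1, h2⟩
    simp
    exact ⟨y.toNat, ⟨by omega, by omega⟩, by omega⟩

lemma length_rangeList (a len : ℕ) : (rangeList a len).length = len := by
  unfold rangeList; simp [Function.comp_def]

lemma cfun_eq (ℓ : ℕ) (v : ℕ → ℤ) (m : ℕ → ℕ) :
    ∀ i x, i < ℓ → pfun m i x = true → cfun ℓ v m x = v i := by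
  intro i x hi hp
  have h : ∃ k, k < ℓ ∧ pfun m k x = true := ⟨i, hi, hp⟩
  rw [cfun, dif_pos h]
  obtain ⟨hk1, hk2⟩ := Nat.find_spec h
  exact congrArg v (pfun_disj ℓ m _ _ x hk1 hi hk2 hp)

/-- Lemma 2. With `M`, `v`, `m` as before and `θ (v i)`, `η (v i)`
permutations of the interval `[n_{i-1}+1, n_i]` for each `i < ℓ`, for every
`σ, π ∈ S(M)` one has
`d_K(T_θ(σ), T_η(π)) ≥ d_K(σ, π) + ∑_{i} d_K(θ_i, η_i)`. -/
theorem stmt1 (ℓ : ℕ) (v : ℕ → ℤ) (m : ℕ → ℕ)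
    (hv : ∀ i j, i < j → j < ℓ → v i < v j)
    (hm : ∀ i, i < ℓ → 0 < m i)
    (θ η : ℤ → List ℤ)
    (hθ : ∀ i, i < ℓ → (↑(θ (v i)) : Multiset ℤ) =
      (↑(rangeList ((∑ j ∈ Finset.range i, m j) + 1) (m i)) : Multiset ℤ))
    (hη : ∀ i, i < ℓ → (↑(η (v i)) : Multiset ℤ) =
      (↑(rangeList ((∑ j ∈ Finset.range i, m j) + 1) (m i)) : Multiset ℤ))
    (σ π : List ℤ)
    (hσ : (↑σ : Multiset ℤ) = ∑ i ∈ Finset.range ℓ, Multiset.replicate (m i) (v i))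
    (hπ : (↑π : Multiset ℤ) = ∑ i ∈ Finset.range ℓ, Multiset.replicate (m i) (v i)) :
    dK σ π + ∑ i ∈ Finset.range ℓ, dK (θ (v i)) (η (v i)) ≤ dK (Tmap θ σ) (Tmap η π) := by
  classical
  have vinj : ∀ i j, i < ℓ → j < ℓ → v i = v j → i = j := by
    intro i j hi hj hvij
    rcases lt_trichotomy i j with h | h | h
    · exact absurd hvij (ne_of_lt (hv i j h hj))
    · exact h
    · exact absurd hvij.symm (ne_of_lt (hv j i h hi))
  have hdisj := pfun_disj ℓ m
  have hθ' : ∀ i, i < ℓ → (↑(θ (v i)) : Multiset ℤ) = ↑(rangeList (Sfun m i + 1) (m i)) := hθ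
  have hη' : ∀ i, i < ℓ → (↑(η (v i)) : Multiset ℤ) = ↑(rangeList (Sfun m i + 1) (m i)) := hη
  have hmemθ : ∀ i, i < ℓ → ∀ y ∈ θ (v i), pfun m i y = true := by
    intro i hi y hy
    have h2 : y ∈ rangeList (Sfun m i + 1) (m i) := by
      have h1 : y ∈ (↑(θ (v i)) : Multiset ℤ) := Multiset.mem_coe.mpr hy
      rw [hθ' i hi] at h1
      exact Multiset.mem_coe.mp h1
    rw [mem_rangeList] at h2
    rw [pfun_iff, Sfun_succ]
    push_cast at h2 ⊢
    omega
  have hmemη : ∀ i, i < ℓ → ∀ y ∈ η (v i), pfun m i y = true := by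
    intro i hi y hy
    have h2 : y ∈ rangeList (Sfun m i + 1) (m i) := by
      have h1 : y ∈ (↑(η (v i)) : Multiset ℤ) := Multiset.mem_coe.mpr hy
      rw [hη' i hi] at h1
      exact Multiset.mem_coe.mp h1
    rw [mem_rangeList] at h2
    rw [pfun_iff, Sfun_succ]
    push_cast at h2 ⊢
    omega
  have lenθ : ∀ i, i < ℓ → (θ (v i)).length = m i := by
    intro i hi
    have h1 := congrArg Multiset.card (hθ' i hi)
    simpa [length_rangeList] using h1
  have lenη : ∀ i, i < ℓ → (η (v i)).length = m i := by
    intro i hi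
    have h1 := congrArg Multiset.card (hη' i hi)
    simpa [length_rangeList] using h1
  have countcount : ∀ L : List ℤ, (↑L : Multiset ℤ) =
      ∑ i ∈ Finset.range ℓ, Multiset.replicate (m i) (v i) →
      ∀ i, i < ℓ → L.count (v i) = m i := by
    intro L hL i hi
    have h1 : Multiset.count (v i) ↑L = m i := by
      rw [hL, Multiset.count_sum']
      rw [Finset.sum_eq_single i]
      · simp [Multiset.count_replicate]
      · intro j hj hji
        rw [Multiset.count_replicate, if_neg]
        exact fun h => hji (vinj j i (Finset.mem_range.mp hj) hi h)
      · intro h; exact absurd (Finset.mem_range.mpr hi) h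
    rwa [Multiset.coe_count] at h1
  have countσ := countcount σ hσ
  have countπ := countcount π hπ
  have memmem : ∀ L : List ℤ, (↑L : Multiset ℤ) =
      ∑ i ∈ Finset.range ℓ, Multiset.replicate (m i) (v i) →
      ∀ x ∈ L, ∃ i, i < ℓ ∧ x = v i := by
    intro L hL x hx
    have h1 : x ∈ (↑L : Multiset ℤ) := Multiset.mem_coe.mpr hx
    rw [hL, Multiset.mem_sum] at h1
    obtain ⟨i, hi, hxi⟩ := h1
    exact ⟨i, Finset.mem_range.mp hi, Multiset.eq_of_mem_replicate hxi⟩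
  have memσ := memmem σ hσ
  have memπ := memmem π hπ
  have hcval := cfun_eq ℓ v m
  have Hθσ : ∀ x ∈ σ, σ.count x ≤ (θ x).length ∧
      ∀ y ∈ (θ x).take (σ.count x), cfun ℓ v m y = x := by
    intro x hx
    obtain ⟨i, hi, rfl⟩ := memσ x hx
    rw [countσ i hi, lenθ i hi]
    refine ⟨le_refl _, fun y hy => ?_⟩
    exact hcval i y hi (hmemθ i hi y (List.mem_of_mem_take hy))
  have Hηπ : ∀ x ∈ π, π.count x ≤ (η x).length ∧
      ∀ y ∈ (η x).take (π.count x), cfun ℓ v m y = x := by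
    intro x hx
    obtain ⟨i, hi, rfl⟩ := memπ x hx
    rw [countπ i hi, lenη i hi]
    refine ⟨le_refl _, fun y hy => ?_⟩
    exact hcval i y hi (hmemη i hi y (List.mem_of_mem_take hy))
  have hAmap : (Tmap θ σ).map (cfun ℓ v m) = σ := Tmap_map _ σ θ Hθσ
  have hBmap : (Tmap η π).map (cfun ℓ v m) = π := Tmap_map _ π η Hηπ
  have hAfil : ∀ i, i < ℓ → (Tmap θ σ).filter (pfun m i) = θ (v i) := by
    intro i hi
    have hfil := Tmap_filter (pfun m i) (v i) σ θ ?_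
    · rw [hfil, countσ i hi, ← lenθ i hi, List.take_length]
    · intro x hx
      obtain ⟨j, hj, rfl⟩ := memσ x hx
      rw [countσ j hj, lenθ j hj]
      refine ⟨le_refl _, fun y hy => ?_⟩
      have hpj := hmemθ j hj y (List.mem_of_mem_take hy)
      constructor
      · intro hpi; exact congrArg v (hdisj j i y hj hi hpj hpi)
      · intro hvv; have hji : j = i := vinj j i hj hi hvv; subst hji; exact hpj
  have hBfil : ∀ i, i < ℓ → (Tmap η π).filter (pfun m i) = η (v i) := by
    intro i hi
    have hfil := Tmap_filter (pfun m i) (v i) π η ?_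
    · rw [hfil, countπ i hi, ← lenη i hi, List.take_length]
    · intro x hx
      obtain ⟨j, hj, rfl⟩ := memπ x hx
      rw [countπ j hj, lenη j hj]
      refine ⟨le_refl _, fun y hy => ?_⟩
      have hpj := hmemη j hj y (List.mem_of_mem_take hy)
      constructor
      · intro hpi; exact congrArg v (hdisj j i y hj hi hpj hpi)
      · intro hvv; have hji : j = i := vinj j i hj hi hvv; subst hji; exact hpj
  have hcovA : ∀ x ∈ Tmap θ σ, ∃ i, i < ℓ ∧ pfun m i x = true := by
    intro x hx
    obtain ⟨z, hz, hxz⟩ := Tmap_mem σ θ (fun x hx => (Hθσ x hx).1) x hx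
    obtain ⟨i, hi, rfl⟩ := memσ z hz
    exact ⟨i, hi, hmemθ i hi x (List.mem_of_mem_take hxz)⟩
  have hcovB : ∀ x ∈ Tmap η π, ∃ i, i < ℓ ∧ pfun m i x = true := by
    intro x hx
    obtain ⟨z, hz, hxz⟩ := Tmap_mem π η (fun x hx => (Hηπ x hx).1) x hx
    obtain ⟨i, hi, rfl⟩ := memπ z hz
    exact ⟨i, hi, hmemη i hi x (List.mem_of_mem_take hxz)⟩
  have hABmult : (↑(Tmap θ σ) : Multiset ℤ) = ↑(Tmap η π) := by
    rw [multiset_partition ℓ (pfun m) hdisj _ hcovA,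
      multiset_partition ℓ (pfun m) hdisj _ hcovB]
    refine Finset.sum_congr rfl (fun i hi => ?_)
    have hi' := Finset.mem_range.mp hi
    rw [hAfil i hi', hBfil i hi', hθ' i hi', hη' i hi']
  obtain ⟨n, hn⟩ := connected hABmult
  have hne : {k | StepsTo k (Tmap θ σ) (Tmap η π)}.Nonempty := ⟨n, hn⟩
  have hmem : StepsTo (dK (Tmap θ σ) (Tmap η π)) (Tmap θ σ) (Tmap η π) := Nat.sInf_mem hne
  have hcc : ∀ i x y, i < ℓ → pfun m i x = true → pfun m i y = true →
      cfun ℓ v m x = cfun ℓ v m y :=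
    fun i x y hi hx hy => (hcval i x hi hx).trans (hcval i y hi hy).symm
  have hcx : ∀ i j x y, i < ℓ → j < ℓ → i ≠ j → pfun m i x = true → pfun m j y = true →
      cfun ℓ v m x ≠ cfun ℓ v m y := by
    intro i j x y hi hj hij hx hy
    rw [hcval i x hi hx, hcval j y hj hy]
    exact fun h => hij (vinj i j hi hj h)
  obtain ⟨n₀, N, hsum, hmap, hfil⟩ := split_lemma ℓ (pfun m) (cfun ℓ v m) hdisj hcc hcx
    (dK (Tmap θ σ) (Tmap η π)) (Tmap θ σ) (Tmap η π) hmem hcovA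
  have h1 : dK σ π ≤ n₀ := Nat.sInf_le (by
    show StepsTo n₀ σ π
    rw [← hAmap, ← hBmap]
    exact hmap)
  have h2 : ∀ i ∈ Finset.range ℓ, dK (θ (v i)) (η (v i)) ≤ N i := by
    intro i hi'
    have hi := Finset.mem_range.mp hi'
    refine Nat.sInf_le ?_
    show StepsTo (N i) (θ (v i)) (η (v i))
    rw [← hAfil i hi, ← hBfil i hi]
    exact hfil i hi
  calc dK σ π + ∑ i ∈ Finset.range ℓ, dK (θ (v i)) (η (v i))
      ≤ n₀ + ∑ i ∈ Finset.range ℓ, N i := add_le_add h1 (Finset.sum_le_sum h2)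
    _ ≤ dK (Tmap θ σ) (Tmap η π) := hsum
end

section
/- For any two multi-permutations σ, π ∈ S(M), the Manhattan distance between their images under ψ is at most their Kendall τ-distance: d_M(ψ(σ), ψ(π)) ≤ d_K(σ, π). -/
theorem getD_map_succ (l : List ℕ) (s d : ℕ) :
    (l.map (· + 1)).getD s (d + 1) = l.getD s d + 1 := by
  rcases lt_or_ge s l.length with h | h
  · rw [List.getD_eq_getElem _ _ (by simpa using h), List.getD_eq_getElem _ _ h]
    simp
  · rw [List.getD_eq_default _ _ (by simpa using h), List.getD_eq_default _ _ h]

theorem List.indexesOf_cons {x y : ℤ} {xs : List ℤ} : (x :: xs).indexesOf y =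
    bif x == y then 0 :: (xs.indexesOf y).map (· + 1) else (xs.indexesOf y).map (· + 1) := by
  simp only [List.indexesOf, List.idxsOf_cons]
  rw [List.idxsOf_start (s := 0 + 1)]
  cases x == y <;> rfl

theorem psiEntry_cons_ne {x c : ℤ} (h : x ≠ c) (l : List ℤ) (s : ℕ) :
    psiEntry (x :: l) c s = psiEntry l c s := by
  unfold psiEntry
  rw [List.indexesOf_cons]
  rw [show (x == c) = false from beq_eq_false_iff_ne.mpr h]
  simp only [cond_false, List.length_cons]
  rw [getD_map_succ]
  simp [List.drop_succ_cons]

theorem psiEntry_cons_self_zero (c : ℤ) (l : List ℤ) :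
    psiEntry (c :: l) c 0 = l.countP (fun x => decide (x < c)) := by
  unfold psiEntry
  rw [List.indexesOf_cons]
  simp

theorem psiEntry_cons_self_succ (c : ℤ) (l : List ℤ) (s : ℕ) :
    psiEntry (c :: l) c (s + 1) = psiEntry l c s := by
  unfold psiEntry
  rw [List.indexesOf_cons]
  simp only [beq_self_eq_true, cond_true, List.getD_cons_succ, List.length_cons]
  rw [getD_map_succ]
  simp [List.drop_succ_cons]

theorem countP_swap (p : ℤ → Bool) (a b : ℤ) (l₁ l₂ : List ℤ) :
    (l₁ ++ a :: b :: l₂).countP p = (l₁ ++ b :: a :: l₂).countP p := by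
  simp only [List.countP_append, List.countP_cons]
  omega

theorem swap_ne {a b : ℤ} (hab : a < b) (l₁ l₂ : List ℤ) (c : ℤ) (hc : c ≠ b) (s : ℕ) :
    psiEntry (l₁ ++ a :: b :: l₂) c s = psiEntry (l₁ ++ b :: a :: l₂) c s := by
  induction l₁ generalizing s with
  | nil =>
    by_cases hca : c = a
    · subst hca
      cases s with
      | zero =>
        rw [List.nil_append, List.nil_append, psiEntry_cons_self_zero,
          psiEntry_cons_ne hab.ne', psiEntry_cons_self_zero, List.countP_cons]
        simp [not_lt.mpr hab.le]
      | succ s =>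
        rw [List.nil_append, List.nil_append, psiEntry_cons_self_succ,
          psiEntry_cons_ne hab.ne', psiEntry_cons_ne hab.ne', psiEntry_cons_self_succ]
    · rw [List.nil_append, List.nil_append, psiEntry_cons_ne (Ne.symm hca),
        psiEntry_cons_ne (Ne.symm hc), psiEntry_cons_ne (Ne.symm hc),
        psiEntry_cons_ne (Ne.symm hca)]
  | cons x l₁ ih =>
    by_cases hxc : x = c
    · subst hxc
      cases s with
      | zero => rw [List.cons_append, List.cons_append, psiEntry_cons_self_zero,
          psiEntry_cons_self_zero, countP_swap]
      | succ s => rw [List.cons_append, List.cons_append, psiEntry_cons_self_succ,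
          psiEntry_cons_self_succ, ih]
    · rw [List.cons_append, List.cons_append, psiEntry_cons_ne hxc,
        psiEntry_cons_ne hxc, ih]

theorem swap_b_ne {a b : ℤ} (hab : a < b) (l₁ l₂ : List ℤ) (s : ℕ) (hs : s ≠ l₁.count b) :
    psiEntry (l₁ ++ a :: b :: l₂) b s = psiEntry (l₁ ++ b :: a :: l₂) b s := by
  induction l₁ generalizing s with
  | nil =>
    simp only [List.count_nil] at hs
    cases s with
    | zero => exact absurd rfl hs
    | succ s =>
      rw [List.nil_append, List.nil_append, psiEntry_cons_ne hab.ne, psiEntry_cons_self_succ,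
        psiEntry_cons_self_succ, psiEntry_cons_ne hab.ne]
  | cons x l₁ ih =>
    by_cases hxb : x = b
    · subst hxb
      rw [List.count_cons_self] at hs
      cases s with
      | zero => rw [List.cons_append, List.cons_append, psiEntry_cons_self_zero,
          psiEntry_cons_self_zero, countP_swap]
      | succ s =>
        rw [List.cons_append, List.cons_append, psiEntry_cons_self_succ,
          psiEntry_cons_self_succ, ih s (by omega)]
    · rw [List.count_cons_of_ne hxb] at hs
      rw [List.cons_append, List.cons_append, psiEntry_cons_ne hxb,
        psiEntry_cons_ne hxb, ih s hs]

theorem swap_b_eq {a b : ℤ} (hab : a < b) (l₁ l₂ : List ℤ) :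
    psiEntry (l₁ ++ b :: a :: l₂) b (l₁.count b) =
      psiEntry (l₁ ++ a :: b :: l₂) b (l₁.count b) + 1 := by
  induction l₁ with
  | nil =>
    rw [List.nil_append, List.nil_append, List.count_nil, psiEntry_cons_self_zero,
      psiEntry_cons_ne hab.ne, psiEntry_cons_self_zero, List.countP_cons]
    simp [hab]
  | cons x l₁ ih =>
    by_cases hxb : x = b
    · subst hxb
      rw [List.count_cons_self, List.cons_append, List.cons_append,
        psiEntry_cons_self_succ, psiEntry_cons_self_succ, ih]
    · rw [List.count_cons_of_ne hxb, List.cons_append, List.cons_append,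
        psiEntry_cons_ne hxb, psiEntry_cons_ne hxb, ih]

theorem manhattanL_self (x : List ℕ) : manhattanL x x = 0 := by
  simp [manhattanL]

theorem manhattanL_append {x y : List ℕ} (h : x.length = y.length) (x' y' : List ℕ) :
    manhattanL (x ++ x') (y ++ y') = manhattanL x y + manhattanL x' y' := by
  unfold manhattanL
  rw [List.length_append, List.length_append, ← h, Nat.max_self]
  have hmx : (x.length + x'.length) ⊔ (x.length + y'.length) =
      x.length + (x'.length ⊔ y'.length) := by omega
  rw [hmx, Finset.sum_range_add]
  congr 1
  · apply Finset.sum_congr rfl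
    intro i hi
    rw [Finset.mem_range] at hi
    rw [List.getD_append _ _ _ _ hi, List.getD_append _ _ _ _ (h ▸ hi)]
  · apply Finset.sum_congr rfl
    intro i _
    rw [List.getD_append_right _ _ _ _ (by omega), List.getD_append_right _ _ _ _ (by omega),
      Nat.add_sub_cancel_left, ← h, Nat.add_sub_cancel_left]

theorem manhattanL_triangle {x y z : List ℕ} (hxy : x.length = y.length)
    (hyz : y.length = z.length) : manhattanL x z ≤ manhattanL x y + manhattanL y z := by
  unfold manhattanL
  rw [hxy, hyz, Nat.max_self, ← Finset.sum_add_distrib]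
  apply Finset.sum_le_sum
  intro i _
  have : (x.getD i 0 : ℤ) - z.getD i 0 =
      ((x.getD i 0 : ℤ) - y.getD i 0) + ((y.getD i 0 : ℤ) - z.getD i 0) := by ring
  rw [this]
  exact Int.natAbs_add_le _ _

theorem manhattanL_comm (x y : List ℕ) : manhattanL x y = manhattanL y x := by
  unfold manhattanL
  rw [Nat.max_comm]
  apply Finset.sum_congr rfl
  intro i _
  rw [← Int.natAbs_neg, neg_sub]

theorem manhattanL_flatten (F G : ℕ → List ℕ) (hlen : ∀ i, (F i).length = (G i).length) :
    ∀ L : List ℕ, manhattanL (L.map F).flatten (L.map G).flatten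
      = (L.map (fun i => manhattanL (F i) (G i))).sum
  | [] => manhattanL_self []
  | i :: L => by
    simp only [List.map_cons, List.flatten_cons, List.sum_cons]
    rw [manhattanL_append (hlen i), manhattanL_flatten F G hlen L]

theorem manhattan_map_eq {f g : ℕ → ℕ} (m : ℕ) (h : ∀ s < m, f s = g s) :
    manhattanL ((List.range m).map f) ((List.range m).map g) = 0 := by
  have : (List.range m).map f = (List.range m).map g := by
    apply List.map_congr_left
    intro s hs
    exact h s (List.mem_range.mp hs)
  rw [this, manhattanL_self]

theorem manhattan_map_le_one {f g : ℕ → ℕ} (m s₀ : ℕ) (h : ∀ s, s ≠ s₀ → f s = g s)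
    (hd : ((f s₀ : ℤ) - (g s₀ : ℤ)).natAbs ≤ 1) :
    manhattanL ((List.range m).map f) ((List.range m).map g) ≤ 1 := by
  unfold manhattanL
  simp only [List.length_map, List.length_range, Nat.max_self]
  calc ∑ i ∈ Finset.range m,
        ((((List.range m).map f).getD i 0 : ℤ) - (((List.range m).map g).getD i 0 : ℤ)).natAbs
      ≤ ∑ i ∈ Finset.range m, (if i = s₀ then 1 else 0) := by
        apply Finset.sum_le_sum
        intro i hi
        rw [Finset.mem_range] at hi
        rw [List.getD_eq_getElem _ _ (by simpa using hi), List.getD_eq_getElem _ _ (by simpa using hi)]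
        simp only [List.getElem_map, List.getElem_range]
        by_cases his : i = s₀
        · subst his; simpa using hd
        · simp [his, h i his]
    _ ≤ 1 := by
        rw [Finset.sum_ite_eq' (Finset.range m) s₀ (fun _ => 1)]
        split <;> omega

theorem sum_map_le_one (t : ℕ → ℕ) (p : ℕ → Prop) [DecidablePred p] :
    ∀ L : List ℕ, L.Nodup → (∀ i ∈ L, t i ≤ if p i then 1 else 0) →
      (∀ i ∈ L, ∀ j ∈ L, p i → p j → i = j) → (L.map t).sum ≤ 1
  | [], _, _, _ => by simp
  | i :: L, hnd, hb, hu => by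
    simp only [List.map_cons, List.sum_cons]
    have hnd' := hnd.of_cons
    have hi := hb i List.mem_cons_self
    by_cases hpi : p i
    · have hz : (L.map t).sum = 0 := by
        rw [List.sum_eq_zero]
        intro x hx
        rw [List.mem_map] at hx
        obtain ⟨j, hj, rfl⟩ := hx
        have := hb j (List.mem_cons_of_mem _ hj)
        by_cases hpj : p j
        · exact absurd (hu i List.mem_cons_self j (List.mem_cons_of_mem _ hj) hpi hpj)
            (fun h => (List.nodup_cons.mp hnd).1 (h ▸ hj))
        · simpa [hpj] using this
      rw [hz]
      simpa [hpi] using hi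
    · have : t i = 0 := by simpa [hpi] using hi
      rw [this, Nat.zero_add]
      exact sum_map_le_one t p L hnd' (fun j hj => hb j (List.mem_cons_of_mem _ hj))
        (fun j hj k hk => hu j (List.mem_cons_of_mem _ hj) k (List.mem_cons_of_mem _ hk))

theorem step_aux (ℓ : ℕ) (v : ℕ → ℤ) (m : ℕ → ℕ)
    (hv : ∀ i j, i < j → j < ℓ → v i < v j)
    {a b : ℤ} (hab : a < b) (l₁ l₂ : List ℤ) :
    manhattanL
      ((((List.range ℓ).drop 1).map
        (fun i => (List.range (m i)).map (fun s => psiEntry (l₁ ++ a :: b :: l₂) (v i) s))).flatten)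
      ((((List.range ℓ).drop 1).map
        (fun i => (List.range (m i)).map (fun s => psiEntry (l₁ ++ b :: a :: l₂) (v i) s))).flatten)
      ≤ 1 := by
  rw [manhattanL_flatten _ _ (fun i => by simp)]
  have hmem : ∀ i ∈ (List.range ℓ).drop 1, i < ℓ := by
    intro i hi
    exact List.mem_range.mp (List.mem_of_mem_drop hi)
  apply sum_map_le_one _ (fun i => v i = b)
  · exact List.Nodup.sublist (List.drop_sublist _ _) List.nodup_range
  · intro i _
    by_cases hvi : v i = b
    · rw [if_pos hvi]
      subst hvi
      apply manhattan_map_le_one (m i) (l₁.count (v i))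
      · intro s hs
        exact swap_b_ne hab l₁ l₂ s hs
      · rw [swap_b_eq hab l₁ l₂]
        simp
    · rw [if_neg hvi]
      rw [manhattan_map_eq (m i) (fun s _ => swap_ne hab l₁ l₂ (v i) hvi s)]
  · intro i hi j hj hpi hpj
    rcases lt_trichotomy i j with h | h | h
    · have := hv i j h (hmem j hj); rw [hpi, hpj] at this; exact absurd this (lt_irrefl b)
    · exact h
    · have := hv j i h (hmem i hi); rw [hpi, hpj] at this; exact absurd this (lt_irrefl b)

theorem stepsTo_trans_s5 : ∀ {m n : ℕ} {σ τ π : List ℤ},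
    StepsTo m σ τ → StepsTo n τ π → StepsTo (m + n) σ π := by
  intro m
  induction m with
  | zero => intro n σ τ π h1 h2; rw [show σ = τ from h1, Nat.zero_add]; exact h2
  | succ m ih =>
    intro n σ τ π h1 h2
    obtain ⟨ρ, hρ, h1'⟩ := h1
    rw [Nat.add_right_comm]
    exact ⟨ρ, hρ, ih h1' h2⟩

theorem stepsTo_cons_s5 (x : ℤ) : ∀ {n : ℕ} {σ π : List ℤ},
    StepsTo n σ π → StepsTo n (x :: σ) (x :: π) := by
  intro n
  induction n with
  | zero => intro σ π h; rw [show σ = π from h]; rfl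
  | succ n ih =>
    intro σ π h
    obtain ⟨τ, ⟨l₁, l₂, a, b, hab, rfl, rfl⟩, h'⟩ := h
    exact ⟨x :: (l₁ ++ b :: a :: l₂), ⟨x :: l₁, l₂, a, b, hab, rfl, rfl⟩, ih h'⟩

theorem bubble (c : ℤ) : ∀ (s₁ s₂ : List ℤ), c ∉ s₁ →
    ∃ n, StepsTo n (s₁ ++ c :: s₂) (c :: (s₁ ++ s₂))
  | [], s₂, _ => ⟨0, rfl⟩
  | x :: s₁, s₂, h => by
    have hxc : c ≠ x := fun hc => h (hc ▸ List.mem_cons_self)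
    obtain ⟨n, hn⟩ := bubble c s₁ s₂ (fun hc => h (List.mem_cons_of_mem _ hc))
    refine ⟨n + 1, ?_⟩
    have h1 : StepsTo n (x :: (s₁ ++ c :: s₂)) (x :: c :: (s₁ ++ s₂)) := stepsTo_cons_s5 x hn
    have h2 : StepsTo 1 (x :: c :: (s₁ ++ s₂)) (c :: x :: (s₁ ++ s₂)) :=
      ⟨c :: x :: (s₁ ++ s₂), ⟨[], s₁ ++ s₂, x, c, Ne.symm hxc, rfl, rfl⟩, rfl⟩
    exact stepsTo_trans_s5 h1 h2

theorem split_first {c : ℤ} : ∀ {l : List ℤ}, c ∈ l →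
    ∃ s₁ s₂, l = s₁ ++ c :: s₂ ∧ c ∉ s₁
  | x :: l, h => by
    by_cases hxc : x = c
    · exact ⟨[], l, by rw [hxc]; rfl, List.not_mem_nil⟩
    · obtain ⟨s₁, s₂, rfl, hs⟩ := split_first ((List.mem_cons.mp h).resolve_left (fun h' => hxc h'.symm))
      exact ⟨x :: s₁, s₂, rfl, by simp [hs, Ne.symm hxc]⟩

theorem exists_steps : ∀ (π σ : List ℤ), (↑σ : Multiset ℤ) = (↑π : Multiset ℤ) →
    ∃ n, StepsTo n σ π
  | [], σ, h => ⟨0, show σ = [] by simpa using (Multiset.coe_eq_zero σ).mp (by simpa using h)⟩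
  | c :: π', σ, h => by
    have hc : c ∈ σ := by
      have : c ∈ (↑σ : Multiset ℤ) := by rw [h]; simp
      simpa using this
    obtain ⟨s₁, s₂, rfl, hs⟩ := split_first hc
    obtain ⟨n₁, hn₁⟩ := bubble c s₁ s₂ hs
    have hmul : (↑(s₁ ++ s₂) : Multiset ℤ) = (↑π' : Multiset ℤ) := by
      have hp : (s₁ ++ c :: s₂).Perm (c :: π') := Multiset.coe_eq_coe.mp h
      exact Multiset.coe_eq_coe.mpr (List.perm_middle.symm.trans hp).cons_inv
    obtain ⟨n₂, hn₂⟩ := exists_steps π' (s₁ ++ s₂) hmul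
    exact ⟨n₁ + n₂, stepsTo_trans_s5 hn₁ (stepsTo_cons_s5 c hn₂)⟩
  termination_by π => π.length


def psiVec (ℓ : ℕ) (v : ℕ → ℤ) (m : ℕ → ℕ) (x : List ℤ) : List ℕ :=
  (((List.range ℓ).drop 1).map
    (fun i => (List.range (m i)).map (fun s => psiEntry x (v i) s))).flatten

theorem psiVec_length (ℓ : ℕ) (v : ℕ → ℤ) (m : ℕ → ℕ) (x y : List ℤ) :
    (psiVec ℓ v m x).length = (psiVec ℓ v m y).length := by
  simp only [psiVec, List.length_flatten, List.map_map, Function.comp_def,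
    List.length_map, List.length_range]

theorem step_bound (ℓ : ℕ) (v : ℕ → ℤ) (m : ℕ → ℕ)
    (hv : ∀ i j, i < j → j < ℓ → v i < v j) {σ τ : List ℤ} (h : AdjTrans σ τ) :
    manhattanL (psiVec ℓ v m σ) (psiVec ℓ v m τ) ≤ 1 := by
  obtain ⟨l₁, l₂, a, b, hab, rfl, rfl⟩ := h
  rcases hab.lt_or_gt with h' | h'
  · exact step_aux ℓ v m hv h' l₁ l₂
  · rw [manhattanL_comm]
    exact step_aux ℓ v m hv h' l₁ l₂

theorem steps_bound (ℓ : ℕ) (v : ℕ → ℤ) (m : ℕ → ℕ)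
    (hv : ∀ i j, i < j → j < ℓ → v i < v j) :
    ∀ (n : ℕ) (σ π : List ℤ), StepsTo n σ π →
      manhattanL (psiVec ℓ v m σ) (psiVec ℓ v m π) ≤ n := by
  intro n
  induction n with
  | zero =>
    intro σ π h
    rw [show σ = π from h, manhattanL_self]
  | succ n ih =>
    intro σ π h
    obtain ⟨τ, hστ, hτπ⟩ := h
    calc manhattanL (psiVec ℓ v m σ) (psiVec ℓ v m π)
        ≤ manhattanL (psiVec ℓ v m σ) (psiVec ℓ v m τ)
          + manhattanL (psiVec ℓ v m τ) (psiVec ℓ v m π) :=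
          manhattanL_triangle (psiVec_length ℓ v m σ τ) (psiVec_length ℓ v m τ π)
      _ ≤ 1 + n := Nat.add_le_add (step_bound ℓ v m hv hστ) (ih τ π hτπ)
      _ = n + 1 := Nat.add_comm 1 n

/-- Lemma 5. For any two multi-permutations `σ, π ∈ S(M)`, the
Manhattan distance between their images under `ψ` (the concatenations of the blocks
`x_i = (x_{i,1}, …, x_{i,m_i})`, `i = 1, …, ℓ-1`) is at most their Kendall τ-distance:
`d_M(ψ(σ), ψ(π)) ≤ d_K(σ, π)`. -/
theorem stmt5 (ℓ : ℕ) (v : ℕ → ℤ) (m : ℕ → ℕ)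
    (hv : ∀ i j, i < j → j < ℓ → v i < v j)
    (hm : ∀ i, i < ℓ → 0 < m i)
    (σ π : List ℤ)
    (hσ : (↑σ : Multiset ℤ) = ∑ i ∈ Finset.range ℓ, Multiset.replicate (m i) (v i))
    (hπ : (↑π : Multiset ℤ) = ∑ i ∈ Finset.range ℓ, Multiset.replicate (m i) (v i)) :
    manhattanL
      ((((List.range ℓ).drop 1).map
        (fun i => (List.range (m i)).map (fun s => psiEntry σ (v i) s))).flatten)
      ((((List.range ℓ).drop 1).map
        (fun i => (List.range (m i)).map (fun s => psiEntry π (v i) s))).flatten)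
      ≤ dK σ π := by
  have hmulti : (↑σ : Multiset ℤ) = (↑π : Multiset ℤ) := hσ.trans hπ.symm
  obtain ⟨n, hn⟩ := exists_steps π σ hmulti
  have hne : {n | StepsTo n σ π}.Nonempty := ⟨n, hn⟩
  have hd : StepsTo (dK σ π) σ π := Nat.sInf_mem hne
  exact steps_bound ℓ v m hv (dK σ π) σ π hd
end
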